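/- Let (m_k)_{1≤k≤n} be positive integers with m_{k+1}/m_k ≥ 2 for all k, and let a_1, …, a_n be real numbers. Then for every complex number z, ∫_0^1 exp(z Σ_{k=1}^n a_k W_{m_k}(x)) dx = Π_{k=1}^n cosh(z a_k). -/

import Mathlib

open MeasureTheory

/-- The base Rademacher function: `1` on `[0, 1/2)`, `-1` on `[1/2, 1)`, extended 1-periodically. -/
noncomputable def r0 (x : ℝ) : ℝ := if Int.fract x < 1 / 2 then 1 else -1

/-- The `n`-th Rademacher function `r_n(x) = r_0(2^n x)`. -/
noncomputable def rademacher (n : ℕ) (x : ℝ) : ℝ := r0 (2 ^ n * x)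

/-- The `n`-th Walsh function `W_n(x) = ∏_i r_i(x)^{k_i}` where `n = ∑ k_i 2^i`. -/
noncomputable def walsh (n : ℕ) (x : ℝ) : ℝ :=
  ∏ i ∈ Finset.range (n + 1), if n.testBit i then rademacher i x else 1

lemma r0_eq (x : ℝ) : r0 x = if Even ⌊2 * x⌋ then 1 else -1 := by
  have hfl : ⌊2 * x⌋ = ⌊2 * Int.fract x⌋ + 2 * ⌊x⌋ := by
    have : 2 * x = 2 * Int.fract x + ((2 * ⌊x⌋ : ℤ) : ℝ) := by
      rw [Int.fract]; push_cast; ring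
    rw [this, Int.floor_add_intCast]
  unfold r0
  by_cases h : Int.fract x < 1 / 2
  · have h0 : ⌊2 * Int.fract x⌋ = 0 := by
      rw [Int.floor_eq_zero_iff]
      exact ⟨by have := Int.fract_nonneg x; linarith, by linarith⟩
    rw [if_pos h, if_pos (by rw [hfl, h0] ; exact ⟨⌊x⌋, by ring⟩)]
  · have h0 : ⌊2 * Int.fract x⌋ = 1 := by
      rw [Int.floor_eq_iff]
      have := Int.fract_lt_one x
      constructor <;> push_cast <;> linarith
    rw [if_neg h, if_neg (by rw [hfl, h0]; intro ⟨k, hk⟩; omega)]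

lemma rademacher_eq (i : ℕ) (x : ℝ) :
    rademacher i x = if Even ⌊(2:ℝ) ^ (i+1) * x⌋ then 1 else -1 := by
  unfold rademacher
  rw [r0_eq]
  have : 2 * (2 ^ i * x) = (2:ℝ) ^ (i+1) * x := by ring
  rw [this]

lemma rademacher_values (i : ℕ) (x : ℝ) : rademacher i x = 1 ∨ rademacher i x = -1 := by
  rw [rademacher_eq]; split <;> simp

lemma rademacher_sq (i : ℕ) (x : ℝ) : rademacher i x * rademacher i x = 1 := by
  rcases rademacher_values i x with h | h <;> rw [h] <;> norm_num

lemma measurable_rademacher (i : ℕ) : Measurable (rademacher i) := by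
  unfold rademacher r0
  exact (Measurable.ite (measurableSet_lt measurable_fract measurable_const)
    measurable_const measurable_const).comp (measurable_const_mul _)

lemma measurable_walsh (p : ℕ) : Measurable (walsh p) := by
  unfold walsh
  apply Finset.measurable_prod
  intro i _
  by_cases h : p.testBit i <;> simp [h, measurable_rademacher]

lemma walsh_eq (p N : ℕ) (h : p + 1 ≤ N) (x : ℝ) :
    walsh p x = ∏ i ∈ Finset.range N, if p.testBit i then rademacher i x else 1 := by
  unfold walsh
  apply Finset.prod_subset (Finset.range_subset_range.2 h)
  intro i hi hni
  simp only [Finset.mem_range, not_lt] at hni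
  have hpi : p < i := by omega
  have : p < 2 ^ i := lt_of_lt_of_le hpi (Nat.lt_two_pow_self (n := i)).le
  simp [Nat.testBit_lt_two_pow this]

lemma walsh_mul (p q : ℕ) (x : ℝ) : walsh p x * walsh q x = walsh (p ^^^ q) x := by
  rw [walsh_eq p (p + q + (p ^^^ q) + 1) (by omega) x,
    walsh_eq q (p + q + (p ^^^ q) + 1) (by omega) x,
    walsh_eq (p ^^^ q) (p + q + (p ^^^ q) + 1) (by omega) x,
    ← Finset.prod_mul_distrib]
  apply Finset.prod_congr rfl
  intro i _
  rw [Nat.testBit_xor]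
  cases hp : p.testBit i <;> cases hq : q.testBit i <;> simp [rademacher_sq]

lemma walsh_zero (x : ℝ) : walsh 0 x = 1 := by unfold walsh; simp

lemma walsh_values (p : ℕ) (x : ℝ) : walsh p x = 1 ∨ walsh p x = -1 := by
  unfold walsh
  apply Finset.prod_induction _ (fun r => r = 1 ∨ r = -1)
  · rintro a b (rfl | rfl) (rfl | rfl) <;> norm_num
  · exact Or.inl rfl
  · intro i _; split
    · exact rademacher_values i x
    · exact Or.inl rfl

lemma walsh_two_pow (J : ℕ) (x : ℝ) : walsh (2 ^ J) x = rademacher J x := by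
  unfold walsh
  rw [Finset.prod_eq_single J]
  · simp [Nat.testBit_two_pow_self]
  · intro i _ hiJ; simp [Nat.testBit_two_pow_of_ne (Ne.symm hiJ)]
  · intro h; exact absurd (Finset.mem_range.2 (by have := Nat.lt_two_pow_self (n := J); omega)) h

lemma floor_dyadic (K j : ℕ) (x : ℝ) (h1 : (j:ℝ)/2^K ≤ x) (h2 : x < ((j:ℝ)+1)/2^K) :
    ⌊(2:ℝ)^K * x⌋ = j := by
  have hK : (0:ℝ) < 2^K := by positivity
  rw [Int.floor_eq_iff]
  rw [div_le_iff₀ hK] at h1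
  rw [lt_div_iff₀ hK] at h2
  constructor <;> push_cast <;> linarith

lemma rademacher_const (i J j : ℕ) (hij : i + 1 ≤ J) (x : ℝ)
    (hx1 : ((j:ℝ))/2^J ≤ x) (hx2 : x < ((j:ℝ)+1)/2^J) :
    rademacher i x = rademacher i ((j:ℝ)/2^J) := by
  rw [rademacher_eq, rademacher_eq]
  set D : ℕ := 2 ^ (J - (i+1)) with hD
  have hDJ : (2:ℕ) ^ (i+1) * D = 2 ^ J := by
    rw [hD, ← pow_add]; congr 1; omega
  have hD0 : 0 < D := Nat.pow_pos (by norm_num)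
  set q : ℕ := j / D with hq
  have hqD : q * D ≤ j := Nat.div_mul_le_self j D
  have hjD : j + 1 ≤ (q+1) * D := by
    have h1 := Nat.div_add_mod j D
    have h2 := Nat.mod_lt j hD0
    have h3 : (q+1)*D = D*(j/D) + D := by rw [hq]; ring
    omega
  have h2J : ((2:ℝ))^J = 2^(i+1) * D := by exact_mod_cast hDJ.symm
  have hq1 : ((q:ℝ))/2^(i+1) ≤ (j:ℝ)/2^J := by
    rw [h2J, div_le_div_iff₀ (by positivity) (by positivity)]
    have hc : ((q:ℝ))*D ≤ j := by exact_mod_cast hqD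
    nlinarith [hc, (by positivity : (0:ℝ) < (2:ℝ)^(i+1))]
  have hq2 : ((j:ℝ)+1)/2^J ≤ ((q:ℝ)+1)/2^(i+1) := by
    rw [h2J, div_le_div_iff₀ (by positivity) (by positivity)]
    have hc : ((j:ℝ)+1) ≤ ((q:ℝ)+1) * D := by exact_mod_cast hjD
    nlinarith [hc, (by positivity : (0:ℝ) < (2:ℝ)^(i+1))]
  have hfx : ⌊(2:ℝ)^(i+1) * x⌋ = q :=
    floor_dyadic (i+1) q x (le_trans hq1 hx1) (lt_of_lt_of_le hx2 hq2)
  have hlt : (j:ℝ)/2^J < ((j:ℝ)+1)/2^J := by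
    have hK : (0:ℝ) < 2^J := by positivity
    rw [div_lt_div_iff₀ hK hK]
    nlinarith [hK]
  have hfj : ⌊(2:ℝ)^(i+1) * ((j:ℝ)/2^J)⌋ = q :=
    floor_dyadic (i+1) q _ hq1 (lt_of_lt_of_le hlt hq2)
  rw [hfx, hfj]

lemma intervalIntegrable_of_bounded {E : Type*} [NormedAddCommGroup E] {f : ℝ → E}
    (hm : AEStronglyMeasurable f volume) (C : ℝ) (hC : ∀ x, ‖f x‖ ≤ C) (a b : ℝ) :
    IntervalIntegrable f volume a b := by
  rw [intervalIntegrable_iff]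
  exact Integrable.mono' ((integrableOn_const_iff).2 (Or.inr measure_Ioc_lt_top))
    hm.restrict (Filter.Eventually.of_forall hC)

lemma integral_congr_Ico {f g : ℝ → ℝ} {a b : ℝ} (hab : a ≤ b)
    (h : ∀ x ∈ Set.Ico a b, f x = g x) :
    ∫ x in a..b, f x = ∫ x in a..b, g x := by
  apply intervalIntegral.integral_congr_ae
  rw [MeasureTheory.ae_iff]
  refine measure_mono_null ?_ (measure_singleton b)
  intro x hx
  simp only [Set.mem_setOf_eq, _root_.not_imp] at hx
  obtain ⟨hx1, hx2⟩ := hx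
  rw [Set.uIoc_of_le hab] at hx1
  simp only [Set.mem_singleton_iff]
  by_contra hne
  exact hx2 (h x ⟨le_of_lt hx1.1, lt_of_le_of_ne hx1.2 hne⟩)

lemma rademacher_intervalIntegrable (i : ℕ) (a b : ℝ) :
    IntervalIntegrable (rademacher i) volume a b := by
  apply intervalIntegrable_of_bounded (measurable_rademacher i).aestronglyMeasurable 1
  intro x
  rcases rademacher_values i x with h | h <;> rw [h] <;> norm_num

lemma dyadic_le (J j : ℕ) : ((j:ℝ))/2^J ≤ ((j:ℝ)+1)/2^J := by
  have hK : (0:ℝ) < 2^J := by positivity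
  rw [div_le_div_iff₀ hK hK]; nlinarith [hK]

lemma integral_rademacher (J j : ℕ) :
    ∫ x in ((j:ℝ)/2^J)..(((j:ℝ)+1)/2^J), rademacher J x = 0 := by
  have hK : (0:ℝ) < 2^(J+1) := by positivity
  have hJ : (0:ℝ) < 2^J := by positivity
  have h2 : (2:ℝ)^(J+1) = 2 * 2^J := by ring
  set a : ℝ := (j:ℝ)/2^J with ha
  set b : ℝ := ((j:ℝ)+1)/2^J with hb
  set c : ℝ := (2*(j:ℝ)+1)/2^(J+1) with hc
  have haa : a = 2*(j:ℝ)/2^(J+1) := by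
    rw [ha, div_eq_div_iff (ne_of_gt hJ) (ne_of_gt hK), h2]; ring
  have hbb : b = (2*(j:ℝ)+2)/2^(J+1) := by
    rw [hb, div_eq_div_iff (ne_of_gt hJ) (ne_of_gt hK), h2]; ring
  have hac : a ≤ c := by
    rw [haa, hc, div_le_div_iff₀ hK hK]; nlinarith [hK]
  have hcb : c ≤ b := by
    rw [hbb, hc, div_le_div_iff₀ hK hK]; nlinarith [hK]
  have h1 : ∫ x in a..c, rademacher J x = ∫ x in a..c, (1:ℝ) := by
    apply integral_congr_Ico hac
    intro x hx
    obtain ⟨hxa, hxc⟩ := hx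
    rw [rademacher_eq]
    have hfl : ⌊(2:ℝ)^(J+1) * x⌋ = ((2*j : ℕ) : ℤ) := by
      apply floor_dyadic
      · push_cast; rw [haa] at hxa; linarith
      · push_cast; rw [hc] at hxc; linarith
    rw [hfl, if_pos (by exact_mod_cast even_two_mul (j:ℤ))]
  have h2' : ∫ x in c..b, rademacher J x = ∫ x in c..b, (-1:ℝ) := by
    apply integral_congr_Ico hcb
    intro x hx
    obtain ⟨hxc, hxb⟩ := hx
    rw [rademacher_eq]
    have hfl : ⌊(2:ℝ)^(J+1) * x⌋ = ((2*j+1 : ℕ) : ℤ) := by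
      apply floor_dyadic
      · push_cast; rw [hc] at hxc; linarith
      · push_cast; rw [hbb] at hxb; ring_nf; ring_nf at hxb; linarith
    rw [hfl, if_neg (by push_cast; intro ⟨k, hk⟩; omega)]
  have hsplit : (∫ x in a..c, rademacher J x) + ∫ x in c..b, rademacher J x
      = ∫ x in a..b, rademacher J x :=
    intervalIntegral.integral_add_adjacent_intervals
      (rademacher_intervalIntegrable J a c) (rademacher_intervalIntegrable J c b)
  rw [← hsplit, h1, h2']
  rw [intervalIntegral.integral_const, intervalIntegral.integral_const]
  rw [haa, hbb, hc]
  simp only [smul_eq_mul, mul_one, mul_neg_one]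
  ring

lemma walsh_intervalIntegrable (p : ℕ) (u v : ℝ) :
    IntervalIntegrable (walsh p) volume u v := by
  apply intervalIntegrable_of_bounded (measurable_walsh p).aestronglyMeasurable 1
  intro x
  rcases walsh_values p x with h | h <;> rw [h] <;> norm_num

lemma walsh_const (p J j : ℕ) (hp : p < 2^J) (x : ℝ)
    (hx1 : ((j:ℝ))/2^J ≤ x) (hx2 : x < ((j:ℝ)+1)/2^J) :
    walsh p x = walsh p ((j:ℝ)/2^J) := by
  unfold walsh
  apply Finset.prod_congr rfl
  intro i _
  by_cases hb : p.testBit i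
  · rw [if_pos hb, if_pos hb]
    have hle : 2^i ≤ p := Nat.ge_two_pow_of_testBit hb
    have hiJ : i < J := by
      by_contra hcon
      have : 2^J ≤ 2^i := Nat.pow_le_pow_right (by norm_num) (by omega)
      omega
    exact rademacher_const i J j (by omega) x hx1 hx2
  · rw [if_neg hb, if_neg hb]

lemma testBit_log2 (M : ℕ) (hM : M ≠ 0) : M.testBit M.log2 = true := by
  have h1 : 2 ^ M.log2 ≤ M := Nat.log2_self_le hM
  have h2 : M < 2 ^ (M.log2 + 1) := Nat.lt_log2_self
  rw [Nat.testBit_eq_decide_div_mod_eq]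
  have hd : M / 2 ^ M.log2 = 1 := by
    apply Nat.div_eq_of_lt_le <;> rw [pow_succ] at * <;> omega
  rw [hd]
  rfl

lemma integral_walsh_zero (M : ℕ) (hM : M ≠ 0) :
    ∫ x in (0:ℝ)..1, walsh M x = 0 := by
  set J := Nat.log2 M with hJ
  have h1 : 2^J ≤ M := Nat.log2_self_le hM
  have h2 : M < 2^(J+1) := Nat.lt_log2_self
  set M' := M ^^^ 2^J with hM'
  have hM'lt : M' < 2^J := by
    apply Nat.lt_pow_two_of_testBit
    intro i hi
    by_cases hiJ : i = J
    · subst hiJ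
      rw [hM', Nat.testBit_xor, testBit_log2 M hM, Nat.testBit_two_pow_self]
      rfl
    · have hJi : J < i := by omega
      have hlt2 : M < 2^i :=
        lt_of_lt_of_le h2 (Nat.pow_le_pow_right (by norm_num) (by omega))
      rw [hM', Nat.testBit_xor, Nat.testBit_two_pow_of_ne (by omega),
        Nat.testBit_lt_two_pow hlt2]
      rfl
  have hMdecomp : M' ^^^ 2^J = M := by rw [hM', Nat.xor_assoc, Nat.xor_self, Nat.xor_zero]
  have hwalsh : ∀ x, walsh M x = walsh M' x * rademacher J x := by
    intro x; rw [← walsh_two_pow J x, walsh_mul, hMdecomp]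
  have hpiece : ∀ j : ℕ, ∫ x in ((j:ℝ)/2^J)..(((j:ℝ)+1)/2^J), walsh M x = 0 := by
    intro j
    have hconst : ∀ x ∈ Set.Ico ((j:ℝ)/2^J) (((j:ℝ)+1)/2^J),
        walsh M x = walsh M' ((j:ℝ)/2^J) * rademacher J x := by
      intro x hx
      rw [hwalsh x]
      congr 1
      exact walsh_const M' J j hM'lt x hx.1 hx.2
    rw [integral_congr_Ico (dyadic_le J j) hconst,
      intervalIntegral.integral_const_mul, integral_rademacher, mul_zero]
  have hsum := intervalIntegral.sum_integral_adjacent_intervals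
    (a := fun j : ℕ => (j:ℝ)/2^J) (μ := volume) (n := 2^J) (f := walsh M)
    (fun k _ => walsh_intervalIntegrable M _ _)
  have ha0 : ((0:ℕ):ℝ)/2^J = 0 := by simp
  have ha1 : (((2:ℕ)^J : ℕ):ℝ)/2^J = 1 := by
    push_cast
    field_simp
  beta_reduce at hsum
  rw [ha0, ha1] at hsum
  rw [← hsum]
  apply Finset.sum_eq_zero
  intro j _
  have hcast : ((j+1 : ℕ):ℝ) = (j:ℝ)+1 := by push_cast; ring
  rw [hcast]
  exact hpiece j

lemma prod_walsh_xor (n : ℕ) (m : ℕ → ℕ)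
    (hpos : ∀ k, 1 ≤ k → k ≤ n → 0 < m k)
    (hB : ∀ k l, 1 ≤ k → k < l → l ≤ n → Nat.log2 (m k) < Nat.log2 (m l)) :
    ∀ t : Finset ℕ, t ⊆ Finset.Icc 1 n → ∀ l ∈ t, (∀ k ∈ t, k ≤ l) →
      ∃ M, 2^(Nat.log2 (m l)) ≤ M ∧ M < 2^(Nat.log2 (m l)+1) ∧
        ∀ x, ∏ k ∈ t, walsh (m k) x = walsh M x := by
  intro t
  induction t using Finset.induction_on_max with
  | empty => intro _ l hl _; exact absurd hl (Finset.notMem_empty l)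
  | insert b s hbs ih =>
    intro hsub l hl hmax
    have hla : l = b := by
      have h1 : b ≤ l := hmax b (Finset.mem_insert_self b s)
      rcases Finset.mem_insert.1 hl with rfl | hls
      · rfl
      · have := hbs l hls; omega
    subst hla
    have hanotin : l ∉ s := fun h => absurd (hbs l h) (lt_irrefl l)
    have hmem : l ∈ Finset.Icc 1 n := hsub (Finset.mem_insert_self _ _)
    rw [Finset.mem_Icc] at hmem
    have hman : m l ≠ 0 := (hpos l hmem.1 hmem.2).ne'
    rcases Finset.eq_empty_or_nonempty s with rfl | hs
    · refine ⟨m l, Nat.log2_self_le hman, Nat.lt_log2_self, ?_⟩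
      intro x; simp
    · have hl's : s.max' hs ∈ s := s.max'_mem hs
      obtain ⟨M', hM'1, hM'2, hM'3⟩ := ih
        (fun k hk => hsub (Finset.mem_insert_of_mem hk)) (s.max' hs) hl's
        (fun k hk => s.le_max' k hk)
      have hmem' : s.max' hs ∈ Finset.Icc 1 n := hsub (Finset.mem_insert_of_mem hl's)
      rw [Finset.mem_Icc] at hmem'
      have hBll : Nat.log2 (m (s.max' hs)) < Nat.log2 (m l) :=
        hB _ l hmem'.1 (hbs _ hl's) hmem.2
      have hM'lt : M' < 2 ^ Nat.log2 (m l) :=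
        lt_of_lt_of_le hM'2 (Nat.pow_le_pow_right (by norm_num) (by omega))
      refine ⟨m l ^^^ M', ?_, ?_, ?_⟩
      · apply Nat.ge_two_pow_of_testBit
        rw [Nat.testBit_xor, testBit_log2 _ hman, Nat.testBit_lt_two_pow hM'lt]
        rfl
      · apply Nat.xor_lt_two_pow Nat.lt_log2_self
        calc M' < 2 ^ Nat.log2 (m l) := hM'lt
          _ < 2 ^ (Nat.log2 (m l) + 1) := by
            exact Nat.pow_lt_pow_right (by norm_num) (by omega)
      · intro x
        rw [Finset.prod_insert hanotin, hM'3 x, walsh_mul]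

lemma walsh_norm_complex (p : ℕ) (x : ℝ) : ‖((walsh p x : ℝ) : ℂ)‖ = 1 := by
  rcases walsh_values p x with h | h <;> rw [h] <;> norm_num

/-- For positive integers `m 1, …, m n` with `m (k+1) / m k ≥ 2` and real
coefficients `a 1, …, a n`, for every complex `z`,
`∫_0^1 exp (z ∑_{k=1}^n a k · W_{m k}(x)) dx = ∏_{k=1}^n cosh (z · a k)`. -/
theorem mgf_walsh_sum (n : ℕ) (m : ℕ → ℕ) (a : ℕ → ℝ)
    (hpos : ∀ k, 1 ≤ k → k ≤ n → 0 < m k)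
    (hlac : ∀ k, 1 ≤ k → k + 1 ≤ n → (m (k + 1) : ℝ) / (m k : ℝ) ≥ 2)
    (z : ℂ) :
    ∫ x in (0 : ℝ)..1,
        Complex.exp (z * ∑ k ∈ Finset.Icc 1 n, (a k : ℂ) * (walsh (m k) x : ℂ)) =
      ∏ k ∈ Finset.Icc 1 n, Complex.cosh (z * (a k : ℂ)) := by
  classical
  have hstep : ∀ k, 1 ≤ k → k + 1 ≤ n → Nat.log2 (m k) < Nat.log2 (m (k+1)) := by
    intro k hk hkn
    have hk0 : 0 < m k := hpos k hk (by omega)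
    have hk1 : 0 < m (k+1) := hpos (k+1) (by omega) hkn
    have h2 : 2 * m k ≤ m (k+1) := by
      have h := hlac k hk hkn
      rw [ge_iff_le, le_div_iff₀ (by exact_mod_cast hk0)] at h
      exact_mod_cast h
    have h3 : 2 ^ (Nat.log2 (m k) + 1) ≤ m (k+1) := by
      have h4 := Nat.log2_self_le hk0.ne'
      calc 2^(Nat.log2 (m k)+1) = 2 * 2^(Nat.log2 (m k)) := by ring
        _ ≤ 2 * m k := by omega
        _ ≤ m (k+1) := h2
    have := (Nat.le_log2 hk1.ne').2 h3
    omega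
  have hmono : ∀ k l, 1 ≤ k → k < l → l ≤ n → Nat.log2 (m k) < Nat.log2 (m l) := by
    intro k l hk hkl hln
    induction l, hkl using Nat.le_induction with
    | base => exact hstep k hk hln
    | succ l hl ih => exact lt_trans (ih (by omega)) (hstep l (by omega) hln)
  have hexp : ∀ x : ℝ,
      Complex.exp (z * ∑ k ∈ Finset.Icc 1 n, (a k : ℂ) * (walsh (m k) x : ℂ))
      = ∑ t ∈ (Finset.Icc 1 n).powerset,
          (∏ k ∈ t, (Complex.sinh (z * (a k : ℂ)) * (walsh (m k) x : ℂ))) *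
          ∏ k ∈ Finset.Icc 1 n \ t, Complex.cosh (z * (a k : ℂ)) := by
    intro x
    rw [Finset.mul_sum, Complex.exp_sum, ← Finset.prod_add]
    apply Finset.prod_congr rfl
    intro k _
    rcases walsh_values (m k) x with h | h <;> rw [h]
    · simp only [Complex.ofReal_one, mul_one]
      rw [add_comm, Complex.cosh_add_sinh]
    · push_cast
      have he : z * ((a k : ℂ) * -1) = -(z * (a k : ℂ)) := by ring
      rw [he, ← Complex.cosh_sub_sinh (z * (a k : ℂ))]
      ring
  simp only [hexp]
  rw [intervalIntegral.integral_finset_sum]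
  · rw [Finset.sum_eq_single (∅ : Finset ℕ)]
    · simp only [Finset.prod_empty, one_mul, Finset.sdiff_empty]
      rw [intervalIntegral.integral_const]
      simp
    · intro t ht htne
      rw [Finset.mem_powerset] at ht
      obtain ⟨M, hM1, hM2, hM3⟩ := prod_walsh_xor n m hpos hmono t ht
        (t.max' (Finset.nonempty_iff_ne_empty.2 htne)) (t.max'_mem _)
        (fun k hk => t.le_max' k hk)
      have hMne : M ≠ 0 := by
        have h0 : 0 < M := lt_of_lt_of_le (Nat.pow_pos (by norm_num)) hM1
        omega
      have hre : ∀ x : ℝ,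
          (∏ k ∈ t, (Complex.sinh (z * (a k : ℂ)) * (walsh (m k) x : ℂ))) *
            ∏ k ∈ Finset.Icc 1 n \ t, Complex.cosh (z * (a k : ℂ))
          = ((∏ k ∈ t, Complex.sinh (z * (a k : ℂ))) *
              ∏ k ∈ Finset.Icc 1 n \ t, Complex.cosh (z * (a k : ℂ))) *
            ((walsh M x : ℝ) : ℂ) := by
        intro x
        rw [Finset.prod_mul_distrib]
        have hw : (∏ k ∈ t, ((walsh (m k) x : ℝ) : ℂ)) = ((walsh M x : ℝ) : ℂ) := by
          rw [← Complex.ofReal_prod, hM3 x]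
        rw [hw]; ring
      simp only [hre]
      rw [intervalIntegral.integral_const_mul, intervalIntegral.integral_ofReal,
        integral_walsh_zero M hMne]
      simp
    · intro h; exact absurd (Finset.empty_mem_powerset _) h
  · intro t _
    apply intervalIntegrable_of_bounded
      (f := fun x => (∏ k ∈ t, (Complex.sinh (z * (a k : ℂ)) * (walsh (m k) x : ℂ))) *
          ∏ k ∈ Finset.Icc 1 n \ t, Complex.cosh (z * (a k : ℂ)))
      (C := (∏ k ∈ t, ‖Complex.sinh (z * (a k : ℂ))‖) *
          ‖∏ k ∈ Finset.Icc 1 n \ t, Complex.cosh (z * (a k : ℂ))‖)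
    · apply Measurable.aestronglyMeasurable
      apply Measurable.mul _ measurable_const
      apply Finset.measurable_prod
      intro k _
      exact (measurable_const.mul (Complex.measurable_ofReal.comp (measurable_walsh (m k))))
    · intro x
      rw [norm_mul]
      apply mul_le_mul_of_nonneg_right _ (norm_nonneg _)
      rw [norm_prod]
      apply le_of_eq
      apply Finset.prod_congr rfl
      intro k _
      rw [norm_mul, walsh_norm_complex, mul_one]
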